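/- Lower bound of the Schur complement Cheeger inequality: for any connected weighted graph $G$ and any disjoint nonempty sets $A, B \subseteq V(G)$, letting $I := \mathtt{Schur}(G, A \cup B)$, one has $\lambda_G \le \frac{c^I(A,B)\, \mathrm{vol}_G(A \cup B)}{\mathrm{vol}_G(A)\, \mathrm{vol}_G(B)} \le \frac{2\, c^I(A,B)}{\min(\mathrm{vol}_G(A), \mathrm{vol}_G(B))}$, where $\lambda_G$ is the smallest nonzero eigenvalue of the normalized Laplacian of $G$, $c^I(A,B)$ is the total weight of edges between $A$ and $B$ in $I$, and $\mathrm{vol}_G(S) = \sum_{v \in S} c_v^G$. -/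

import Mathlib

open Matrix MeasureTheory
open scoped Classical

/-- The (weighted) Laplacian matrix of the weighted graph on `V` with weights `c`. -/
noncomputable def lapl {V : Type*} [Fintype V] [DecidableEq V] (c : V → V → ℝ) :
    Matrix V V ℝ :=
  fun u v => if u = v then ∑ w, c u w else -c u v

/-- The graph described by `L` is connected: the kernel of `L` consists of constants. -/
def LapConnected {V : Type*} [Fintype V] (L : Matrix V V ℝ) : Prop :=
  ∀ x : V → ℝ, L *ᵥ x = 0 → ∃ k : ℝ, ∀ v, x v = k

/-- The Schur complement of `L` onto the rows and columns indexed by `S`,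
eliminating the vertices outside of `S`. -/
noncomputable def schur {V : Type*} [Fintype V] [DecidableEq V]
    (L : Matrix V V ℝ) (S : Set V) : Matrix S S ℝ :=
  (Matrix.of fun i j : S => L i.1 j.1)
    - (Matrix.of fun (i : S) (j : {v : V // v ∉ S}) => L i.1 j.1)
        * (Matrix.of fun i j : {v : V // v ∉ S} => L i.1 j.1)⁻¹
        * (Matrix.of fun (i : {v : V // v ∉ S}) (j : S) => L i.1 j.1)

/-- `B` is the Moore–Penrose pseudoinverse of `A`. -/
def IsMPInv {n : Type*} [Fintype n] (A B : Matrix n n ℝ) : Prop :=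
  A * B * A = A ∧ B * A * B = B ∧ (A * B)ᵀ = A * B ∧ (B * A)ᵀ = B * A

/-- The weighted degree of `v`. -/
noncomputable def wdeg {V : Type*} [Fintype V] (c : V → V → ℝ) (v : V) : ℝ := ∑ u, c v u

/-- The smallest Rayleigh quotient of `M` over nonzero vectors orthogonal to `w`;
for a PSD matrix whose kernel is spanned by `w`, this is the smallest nonzero
eigenvalue of `M`. -/
noncomputable def rayleighMin {n : Type*} [Fintype n] (M : Matrix n n ℝ) (w : n → ℝ) : ℝ :=
  sInf {r : ℝ | ∃ x : n → ℝ, x ≠ 0 ∧ x ⬝ᵥ w = 0 ∧ r = (x ⬝ᵥ (M *ᵥ x)) / (x ⬝ᵥ x)}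

/-- The normalized Laplacian `D^{-1/2} L D^{-1/2}`. -/
noncomputable def normLapl {V : Type*} [Fintype V] [DecidableEq V] (c : V → V → ℝ) :
    Matrix V V ℝ :=
  fun u v => lapl c u v / (Real.sqrt (wdeg c u) * Real.sqrt (wdeg c v))

/-- `λ_G`, the smallest nonzero eigenvalue of the normalized Laplacian,
via its Rayleigh quotient characterization over vectors orthogonal to `D^{1/2} 1`. -/
noncomputable def lambdaG {V : Type*} [Fintype V] [DecidableEq V] (c : V → V → ℝ) : ℝ :=
  rayleighMin (normLapl c) (fun v => Real.sqrt (wdeg c v))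

section CheegerHelpers
set_option linter.unusedSectionVars false
set_option linter.unusedVariables false
set_option linter.unreachableTactic false
set_option linter.unusedTactic false
set_option maxHeartbeats 1000000
variable {V : Type*} [Fintype V] [DecidableEq V]

lemma sum_split (S : Set V) [Fintype ↥S] (f : V → ℝ) :
    ∑ v, f v = (∑ v : S, f v.1) + ∑ v : {v : V // v ∉ S}, f v.1 := by
  refine ((Fintype.sum_subtype_add_sum_subtype (· ∈ S) f).symm).trans ?_
  congr! <;> exact Subsingleton.elim _ _

lemma lapl_row (c : V → V → ℝ) (hdiag : ∀ v, c v v = 0) (x : V → ℝ) (u : V) :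
    (lapl c *ᵥ x) u = ∑ v, c u v * (x u - x v) := by
  have h : ∀ v, lapl c u v * x v = (if v = u then (∑ w, c u w) * x v else 0) - c u v * x v := by
    intro v
    by_cases hv : v = u
    · subst hv; simp [lapl, hdiag]
    · have hv2 : u ≠ v := fun h => hv h.symm
      simp [lapl, hv, hv2]
  simp only [mulVec, dotProduct]
  rw [Finset.sum_congr rfl (fun v _ => h v), Finset.sum_sub_distrib,
    Finset.sum_ite_eq' Finset.univ u (fun v => (∑ w, c u w) * x v)]
  simp only [Finset.mem_univ, if_true]
  rw [Finset.sum_congr rfl (fun v _ => mul_sub (c u v) (x u) (x v)), Finset.sum_sub_distrib,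
    ← Finset.sum_mul]

lemma lapl_quad (c : V → V → ℝ) (hsymm : ∀ u v, c u v = c v u) (hdiag : ∀ v, c v v = 0)
    (x : V → ℝ) :
    x ⬝ᵥ (lapl c *ᵥ x) = (∑ u, ∑ v, c u v * (x u - x v) ^ 2) / 2 := by
  have swap : ∑ u, ∑ v, c u v * (x u - x v) * x v
      = - ∑ u, ∑ v, c u v * (x u - x v) * x u := by
    rw [Finset.sum_comm, ← Finset.sum_neg_distrib]
    refine Finset.sum_congr rfl fun u _ => ?_
    rw [← Finset.sum_neg_distrib]
    refine Finset.sum_congr rfl fun v _ => ?_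
    rw [hsymm v u]; ring
  have lhs : x ⬝ᵥ (lapl c *ᵥ x) = ∑ u, ∑ v, c u v * (x u - x v) * x u := by
    simp only [dotProduct]
    refine Finset.sum_congr rfl fun u _ => ?_
    rw [lapl_row c hdiag x u, Finset.mul_sum]
    exact Finset.sum_congr rfl fun v _ => by ring
  have expand : ∑ u, ∑ v, c u v * (x u - x v) ^ 2
      = ∑ u, ∑ v, c u v * (x u - x v) * x u - ∑ u, ∑ v, c u v * (x u - x v) * x v := by
    rw [← Finset.sum_sub_distrib]
    refine Finset.sum_congr rfl fun u _ => ?_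
    rw [← Finset.sum_sub_distrib]
    exact Finset.sum_congr rfl fun v _ => by ring
  rw [lhs, expand, swap]; ring

lemma lapl_psd (c : V → V → ℝ) (hsymm : ∀ u v, c u v = c v u) (hnonneg : ∀ u v, 0 ≤ c u v)
    (hdiag : ∀ v, c v v = 0) (x : V → ℝ) : 0 ≤ x ⬝ᵥ (lapl c *ᵥ x) := by
  rw [lapl_quad c hsymm hdiag x]
  apply div_nonneg _ (by norm_num)
  exact Finset.sum_nonneg fun u _ => Finset.sum_nonneg fun v _ =>
    mul_nonneg (hnonneg u v) (sq_nonneg _)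

lemma lapl_kern (c : V → V → ℝ) (hsymm : ∀ u v, c u v = c v u) (hnonneg : ∀ u v, 0 ≤ c u v)
    (hdiag : ∀ v, c v v = 0) (x : V → ℝ) (hx : x ⬝ᵥ (lapl c *ᵥ x) = 0) :
    lapl c *ᵥ x = 0 := by
  rw [lapl_quad c hsymm hdiag x, div_eq_zero_iff] at hx
  have hx' : ∑ u, ∑ v, c u v * (x u - x v) ^ 2 = 0 := by
    rcases hx with h | h
    · exact h
    · norm_num at h
  have hterm : ∀ u v : V, c u v * (x u - x v) ^ 2 = 0 := by
    intro u v
    have h1 := (Finset.sum_eq_zero_iff_of_nonneg (fun u _ =>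
      Finset.sum_nonneg fun v _ => mul_nonneg (hnonneg u v) (sq_nonneg _))).mp hx' u
      (Finset.mem_univ u)
    exact (Finset.sum_eq_zero_iff_of_nonneg (fun v _ =>
      mul_nonneg (hnonneg u v) (sq_nonneg _))).mp h1 v (Finset.mem_univ v)
  funext u
  rw [lapl_row c hdiag x u]
  simp only [Pi.zero_apply]
  apply Finset.sum_eq_zero
  intro v _
  rcases mul_eq_zero.mp (hterm u v) with h | h
  · rw [h, zero_mul]
  · rw [pow_eq_zero_iff (by norm_num) |>.mp h, mul_zero]

lemma wdeg_pos (c : V → V → ℝ) (hsymm : ∀ u v, c u v = c v u) (hnonneg : ∀ u v, 0 ≤ c u v)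
    (hconn : LapConnected (lapl c)) (u0 u1 : V) (hne : u0 ≠ u1) (v : V) :
    0 < wdeg c v := by
  rcases lt_or_eq_of_le (Finset.sum_nonneg fun u _ => hnonneg v u) with h | h
  · exact h
  have hzero : ∀ u, c v u = 0 := fun u =>
    (Finset.sum_eq_zero_iff_of_nonneg fun u _ => hnonneg v u).mp h.symm u (Finset.mem_univ u)
  set x : V → ℝ := fun w => if w = v then 1 else 0 with hxdef
  have hLx : lapl c *ᵥ x = 0 := by
    funext u
    simp only [mulVec, dotProduct, hxdef, Pi.zero_apply, mul_ite, mul_one, mul_zero]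
    rw [Finset.sum_ite_eq' Finset.univ v (fun w => lapl c u w)]
    simp only [Finset.mem_univ, if_true]
    by_cases huv : u = v
    · subst huv; simp [lapl, hzero]
    · simp [lapl, huv, hsymm u v, hzero]
  obtain ⟨k, hk⟩ := hconn x hLx
  have h1 : (1 : ℝ) = k := by simpa [hxdef] using hk v
  rcases eq_or_ne u0 v with h0 | h0
  · have := hk u1; rw [hxdef] at this
    simp only [if_neg (fun h' : u1 = v => hne (h0.trans h'.symm))] at this
    rw [← h1] at this; norm_num at this
  · have := hk u0; rw [hxdef] at this
    simp only [if_neg h0] at this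
    rw [← h1] at this; norm_num at this

lemma rowS (L : Matrix V V ℝ) (S : Set V) [Fintype ↥S] (x : V → ℝ) (i : S) :
    (L *ᵥ x) i.1 = ((Matrix.of fun i j : S => L i.1 j.1) *ᵥ fun j => x j.1) i
      + ((Matrix.of fun (i : S) (j : {v : V // v ∉ S}) => L i.1 j.1) *ᵥ fun j => x j.1) i := by
  simp only [mulVec, dotProduct, Matrix.of_apply]
  exact sum_split S (fun v => L i.1 v * x v)

lemma rowT (L : Matrix V V ℝ) (S : Set V) [Fintype ↥S] (x : V → ℝ) (i : {v : V // v ∉ S}) :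
    (L *ᵥ x) i.1 = ((Matrix.of fun (i : {v : V // v ∉ S}) (j : S) => L i.1 j.1) *ᵥ fun j => x j.1) i
      + ((Matrix.of fun i j : {v : V // v ∉ S} => L i.1 j.1) *ᵥ fun j => x j.1) i := by
  simp only [mulVec, dotProduct, Matrix.of_apply]
  exact sum_split S (fun v => L i.1 v * x v)

lemma schur_energy (L : Matrix V V ℝ) (S : Set V) [Fintype ↥S]
    (hM : IsUnit ((Matrix.of fun i j : {v : V // v ∉ S} => L i.1 j.1)).det)
    (z : S → ℝ) (y : V → ℝ)
    (hy : ∀ v, y v = if h : v ∈ S then z ⟨v, h⟩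
      else -(((Matrix.of fun i j : {v : V // v ∉ S} => L i.1 j.1)⁻¹ *ᵥ
        ((Matrix.of fun (i : {v : V // v ∉ S}) (j : S) => L i.1 j.1) *ᵥ z)) ⟨v, h⟩)) :
    y ⬝ᵥ (L *ᵥ y) = z ⬝ᵥ (schur L S *ᵥ z) := by
  set P : Matrix S S ℝ := Matrix.of fun i j : S => L i.1 j.1 with hP
  set Q : Matrix S {v : V // v ∉ S} ℝ :=
    Matrix.of fun (i : S) (j : {v : V // v ∉ S}) => L i.1 j.1 with hQ
  set R : Matrix {v : V // v ∉ S} S ℝ :=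
    Matrix.of fun (i : {v : V // v ∉ S}) (j : S) => L i.1 j.1 with hR
  set M : Matrix {v : V // v ∉ S} {v : V // v ∉ S} ℝ :=
    Matrix.of fun i j : {v : V // v ∉ S} => L i.1 j.1 with hM'
  set w : {v : V // v ∉ S} → ℝ := M⁻¹ *ᵥ (R *ᵥ z) with hw
  have hyS : (fun j : S => y j.1) = z := by
    funext j; rw [hy]; exact dif_pos j.2
  have hyT : (fun j : {v : V // v ∉ S} => y j.1) = -w := by
    funext j; rw [hy]; exact dif_neg j.2
  have hMw : M *ᵥ w = R *ᵥ z := by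
    rw [hw, mulVec_mulVec, Matrix.mul_nonsing_inv _ hM, one_mulVec]
  have hschur : schur L S = P - Q * M⁻¹ * R := rfl
  calc y ⬝ᵥ (L *ᵥ y)
      = (∑ i : S, y i.1 * (L *ᵥ y) i.1)
        + ∑ i : {v : V // v ∉ S}, y i.1 * (L *ᵥ y) i.1 := by
        rw [dotProduct]; exact sum_split S (fun v => y v * (L *ᵥ y) v)
    _ = (∑ i : S, z i * ((P *ᵥ z) i + (Q *ᵥ (-w)) i))
        + ∑ i : {v : V // v ∉ S}, (-w) i * ((R *ᵥ z) i + (M *ᵥ (-w)) i) := by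
        congr 1
        · refine Finset.sum_congr rfl fun i _ => ?_
          rw [rowS L S y i, ← hP, ← hQ, hyS, hyT]
          congr 1
          exact congrFun hyS i
        · refine Finset.sum_congr rfl fun i _ => ?_
          rw [rowT L S y i, ← hR, ← hM', hyS, hyT]
          congr 1
          exact congrFun hyT i
    _ = z ⬝ᵥ (P *ᵥ z) - z ⬝ᵥ (Q *ᵥ w) - (w ⬝ᵥ (R *ᵥ z)) + w ⬝ᵥ (M *ᵥ w) := by
        simp only [mulVec_neg, Pi.neg_apply, dotProduct]
        have e1 : ∑ x : S, z x * ((P *ᵥ z) x + -(Q *ᵥ w) x)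
            = ∑ i : S, z i * (P *ᵥ z) i - ∑ i : S, z i * (Q *ᵥ w) i := by
          rw [← Finset.sum_sub_distrib]
          exact Finset.sum_congr rfl fun i _ => by ring
        have e2 : ∑ x : {v : V // v ∉ S}, -w x * ((R *ᵥ z) x + -(M *ᵥ w) x)
            = -(∑ i : {v : V // v ∉ S}, w i * (R *ᵥ z) i)
              + ∑ i : {v : V // v ∉ S}, w i * (M *ᵥ w) i := by
          rw [← Finset.sum_neg_distrib, ← Finset.sum_add_distrib]
          exact Finset.sum_congr rfl fun i _ => by ring
        rw [e1, e2]
        ring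
    _ = z ⬝ᵥ (P *ᵥ z) - z ⬝ᵥ (Q *ᵥ w) := by rw [hMw]; ring
    _ = z ⬝ᵥ (schur L S *ᵥ z) := by
        rw [hschur, Matrix.sub_mulVec, dotProduct_sub, ← mulVec_mulVec, ← mulVec_mulVec, ← hw]

lemma schur_rowsum (L : Matrix V V ℝ) (S : Set V) [Fintype ↥S]
    (hM : IsUnit ((Matrix.of fun i j : {v : V // v ∉ S} => L i.1 j.1)).det)
    (h1 : L *ᵥ (fun _ => (1 : ℝ)) = 0) :
    schur L S *ᵥ (fun _ => (1 : ℝ)) = 0 := by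
  set P : Matrix S S ℝ := Matrix.of fun i j : S => L i.1 j.1 with hP
  set Q : Matrix S {v : V // v ∉ S} ℝ :=
    Matrix.of fun (i : S) (j : {v : V // v ∉ S}) => L i.1 j.1 with hQ
  set R : Matrix {v : V // v ∉ S} S ℝ :=
    Matrix.of fun (i : {v : V // v ∉ S}) (j : S) => L i.1 j.1 with hR
  set M : Matrix {v : V // v ∉ S} {v : V // v ∉ S} ℝ :=
    Matrix.of fun i j : {v : V // v ∉ S} => L i.1 j.1 with hM'
  have hMone : M *ᵥ (fun _ => (1 : ℝ)) = -(R *ᵥ (fun _ => (1 : ℝ))) := by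
    funext i
    have := rowT L S (fun _ => (1 : ℝ)) i
    rw [h1] at this
    simp only [Pi.zero_apply] at this
    rw [← hR, ← hM'] at this
    simp only [Pi.neg_apply]
    linarith [this]
  have hinv : M⁻¹ *ᵥ (R *ᵥ (fun _ => (1 : ℝ))) = -(fun _ => (1 : ℝ)) := by
    rw [← neg_neg (R *ᵥ _), ← hMone, mulVec_neg, mulVec_mulVec,
      Matrix.nonsing_inv_mul _ hM, one_mulVec]
  have hschur : schur L S = P - Q * M⁻¹ * R := rfl
  rw [hschur, Matrix.sub_mulVec, ← mulVec_mulVec, ← mulVec_mulVec, hinv, mulVec_neg]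
  funext i
  have := rowS L S (fun _ => (1 : ℝ)) i
  rw [h1] at this
  simp only [Pi.zero_apply] at this
  rw [← hP, ← hQ] at this
  simp only [Pi.sub_apply, Pi.neg_apply, Pi.zero_apply]
  linarith [this]

lemma schur_symm (L : Matrix V V ℝ) (S : Set V) [Fintype ↥S] (hLs : Lᵀ = L)
    (hM : IsUnit ((Matrix.of fun i j : {v : V // v ∉ S} => L i.1 j.1)).det) :
    (schur L S)ᵀ = schur L S := by
  have hL : ∀ u v, L u v = L v u := fun u v => by
    conv_lhs => rw [← hLs]
    rfl
  set P : Matrix S S ℝ := Matrix.of fun i j : S => L i.1 j.1 with hP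
  set Q : Matrix S {v : V // v ∉ S} ℝ :=
    Matrix.of fun (i : S) (j : {v : V // v ∉ S}) => L i.1 j.1 with hQ
  set R : Matrix {v : V // v ∉ S} S ℝ :=
    Matrix.of fun (i : {v : V // v ∉ S}) (j : S) => L i.1 j.1 with hR
  set M : Matrix {v : V // v ∉ S} {v : V // v ∉ S} ℝ :=
    Matrix.of fun i j : {v : V // v ∉ S} => L i.1 j.1 with hM'
  have hPt : Pᵀ = P := by ext i j; exact hL j.1 i.1
  have hMt : Mᵀ = M := by ext i j; exact hL j.1 i.1
  have hQt : Qᵀ = R := by ext i j; exact hL j.1 i.1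
  have hRt : Rᵀ = Q := by ext i j; exact hL j.1 i.1
  have hschur : schur L S = P - Q * M⁻¹ * R := rfl
  rw [hschur, Matrix.transpose_sub, Matrix.transpose_mul, Matrix.transpose_mul, hPt, hQt, hRt,
    Matrix.transpose_nonsing_inv, hMt, Matrix.mul_assoc]

lemma cut_quad (A B S : Set V) [Fintype ↥S] (hS : S = A ∪ B) (hd : Disjoint A B)
    (N : Matrix ↥S ↥S ℝ)
    (hNt : Nᵀ = N) (hN1 : N *ᵥ (fun _ => (1 : ℝ)) = 0) (α β : ℝ) :
    (fun i : ↥S => if i.1 ∈ A then α else -β) ⬝ᵥ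
      (N *ᵥ (fun i : ↥S => if i.1 ∈ A then α else -β))
    = (∑ i : ↥S, ∑ j : ↥S, if i.1 ∈ A ∧ j.1 ∈ B then -(N i j) else 0)
        * (α + β) ^ 2 := by
  have hN : ∀ u v, N u v = N v u := by
    intro u v
    conv_lhs => rw [← hNt]
    rfl
  have hpart : ∀ i : ↥S, (i.1 ∈ A ∧ i.1 ∉ B) ∨ (i.1 ∉ A ∧ i.1 ∈ B) := by
    intro i
    have h2 : i.1 ∈ A ∪ B := by rw [← hS]; exact i.2
    rcases h2 with h | h
    · exact Or.inl ⟨h, Set.disjoint_left.mp hd h⟩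
    · exact Or.inr ⟨Set.disjoint_right.mp hd h, h⟩
  set χ : ↥S → ℝ := fun i => if i.1 ∈ B then 1 else 0 with hχ
  set z : ↥S → ℝ := fun i => if i.1 ∈ A then α else -β with hz
  have hzχ : z = (fun _ => α) - (α + β) • χ := by
    funext i
    rcases hpart i with ⟨h1, h2⟩ | ⟨h1, h2⟩ <;>
      simp [hz, hχ, h1, h2] <;> ring
  have hrow1 : ∀ x : ↥S → ℝ, (fun _ => (1 : ℝ)) ⬝ᵥ (N *ᵥ x) = 0 := by
    intro x
    rw [dotProduct_mulVec, ← hNt, vecMul_transpose, hN1, zero_dotProduct]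
  have hcolsum : ∀ j, ∑ i, N i j = 0 := by
    intro j
    have := congrFun hN1 j
    simpa [mulVec, dotProduct, hN j] using this
  have hNz : N *ᵥ z = -((α + β) • (N *ᵥ χ)) := by
    rw [hzχ, Matrix.mulVec_sub, Matrix.mulVec_smul]
    have : N *ᵥ (fun _ => α) = 0 := by
      have : (fun _ : ↥S => α) = α • (fun _ => (1 : ℝ)) := by funext i; simp
      rw [this, Matrix.mulVec_smul, hN1, smul_zero]
    rw [this, zero_sub]
  have hconst : ∀ x : ↥S → ℝ, (fun _ : ↥S => α) ⬝ᵥ (N *ᵥ x) = 0 := by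
    intro x
    have : (fun _ : ↥S => α) = α • (fun _ => (1 : ℝ)) := by funext i; simp
    rw [this, smul_dotProduct, hrow1, smul_zero]
  have hmain : z ⬝ᵥ (N *ᵥ z) = (α + β) ^ 2 * (χ ⬝ᵥ (N *ᵥ χ)) := by
    rw [hNz, dotProduct_neg, dotProduct_smul, hzχ, sub_dotProduct, smul_dotProduct,
      hconst χ, zero_sub, smul_eq_mul, smul_eq_mul]
    ring
  have hcol : ∀ j, ∑ i, (if i.1 ∈ B then (1:ℝ) else 0) * N i j
      = -∑ i, (if i.1 ∈ A then (1:ℝ) else 0) * N i j := by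
    intro j
    have hsum : ∑ i, ((if i.1 ∈ A then (1:ℝ) else 0) + (if i.1 ∈ B then (1:ℝ) else 0)) * N i j
        = ∑ i, N i j := by
      refine Finset.sum_congr rfl fun i _ => ?_
      rcases hpart i with ⟨h1, h2⟩ | ⟨h1, h2⟩ <;> simp [h1, h2]
    simp only [add_mul, Finset.sum_add_distrib] at hsum
    rw [hcolsum j] at hsum
    linarith
  have stepA : χ ⬝ᵥ (N *ᵥ χ) = ∑ j, χ j * ∑ i, χ i * N i j := by
    simp only [dotProduct, mulVec, Finset.mul_sum]
    rw [Finset.sum_comm]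
    exact Finset.sum_congr rfl fun j _ => Finset.sum_congr rfl fun i _ => by ring
  have stepC : ∑ j, χ j * ∑ i, χ i * N i j
      = ∑ j, ∑ i, if i.1 ∈ A ∧ j.1 ∈ B then -(N i j) else 0 := by
    refine Finset.sum_congr rfl fun j _ => ?_
    have : ∑ i, χ i * N i j = ∑ i, (if i.1 ∈ B then (1:ℝ) else 0) * N i j := by
      refine Finset.sum_congr rfl fun i _ => ?_
      rw [hχ]
    rw [this, hcol j, mul_neg, Finset.mul_sum, ← Finset.sum_neg_distrib]
    refine Finset.sum_congr rfl fun i _ => ?_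
    by_cases h1 : i.1 ∈ A <;> by_cases h2 : j.1 ∈ B <;> simp [hχ, h1, h2]
  have hχfinal : χ ⬝ᵥ (N *ᵥ χ)
      = ∑ i, ∑ j, if i.1 ∈ A ∧ j.1 ∈ B then -(N i j) else 0 := by
    rw [stepA, stepC, Finset.sum_comm]
  rw [hmain, hχfinal]
  ring

end CheegerHelpers

set_option maxHeartbeats 2000000 in
/-- Lower bound of the Schur complement Cheeger inequality:
`λ_G ≤ c^I(A,B) vol_G(A∪B) / (vol_G(A) vol_G(B)) ≤ 2 c^I(A,B) / min(vol_G(A), vol_G(B))`. -/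
theorem schur_cheeger_lower_bound {V : Type*} [Fintype V] [DecidableEq V]
    (c : V → V → ℝ) (hsymm : ∀ u v, c u v = c v u) (hnonneg : ∀ u v, 0 ≤ c u v)
    (hdiag : ∀ v, c v v = 0) (hconn : LapConnected (lapl c))
    (A B : Set V) (hd : Disjoint A B) (hA : A.Nonempty) (hB : B.Nonempty)
    (cI volA volB volAB : ℝ)
    (hcI : cI = ∑ i : ↥(A ∪ B), ∑ j : ↥(A ∪ B),
        if i.1 ∈ A ∧ j.1 ∈ B then -(schur (lapl c) (A ∪ B) i j) else 0)
    (hvolA : volA = ∑ v : V, if v ∈ A then wdeg c v else 0)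
    (hvolB : volB = ∑ v : V, if v ∈ B then wdeg c v else 0)
    (hvolAB : volAB = ∑ v : V, if v ∈ A ∪ B then wdeg c v else 0) :
    lambdaG c ≤ cI * volAB / (volA * volB) ∧
    cI * volAB / (volA * volB) ≤ 2 * cI / min volA volB := by
  classical
  obtain ⟨a0, ha0⟩ := hA
  obtain ⟨b0, hb0⟩ := hB
  have hdAB : ∀ v, v ∈ A → v ∉ B := fun v hv => Set.disjoint_left.mp hd hv
  have hab0 : a0 ≠ b0 := fun h => hdAB a0 ha0 (h ▸ hb0)
  have hdeg : ∀ v, 0 < wdeg c v := wdeg_pos c hsymm hnonneg hconn a0 b0 hab0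
  have hvolApos : 0 < volA := by
    rw [hvolA]
    apply Finset.sum_pos'
    · intro v _; by_cases h : v ∈ A <;> simp [h, le_of_lt (hdeg v)]
    · exact ⟨a0, Finset.mem_univ a0, by simp [ha0, hdeg a0]⟩
  have hvolBpos : 0 < volB := by
    rw [hvolB]
    apply Finset.sum_pos'
    · intro v _; by_cases h : v ∈ B <;> simp [h, le_of_lt (hdeg v)]
    · exact ⟨b0, Finset.mem_univ b0, by simp [hb0, hdeg b0]⟩
  have hvolABsum : volAB = volA + volB := by
    rw [hvolAB, hvolA, hvolB, ← Finset.sum_add_distrib]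
    refine Finset.sum_congr rfl fun v _ => ?_
    by_cases h1 : v ∈ A
    · have h2 : v ∉ B := hdAB v h1
      simp [h1, h2, Set.mem_union]
    · by_cases h2 : v ∈ B <;> simp [h1, h2, Set.mem_union]
  have hLs : (lapl c)ᵀ = lapl c := by
    ext u v
    rw [Matrix.transpose_apply]
    by_cases h : u = v
    · subst h; rfl
    · have h' : ¬ v = u := fun hh => h hh.symm
      simp only [lapl, if_neg h, if_neg h', hsymm u v]
  have hone : lapl c *ᵥ (fun _ => (1:ℝ)) = 0 := by
    funext u
    rw [lapl_row c hdiag (fun _ => 1) u]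
    simp
  obtain ⟨S, hSdef⟩ : ∃ S : Set V, S = A ∪ B := ⟨A ∪ B, rfl⟩
  have hmemS : ∀ v, v ∈ S ↔ v ∈ A ∨ v ∈ B := fun v => by rw [hSdef]; exact Set.mem_union v A B
  have ha0S : a0 ∈ S := (hmemS a0).mpr (Or.inl ha0)
  have hb0S : b0 ∈ S := (hmemS b0).mpr (Or.inr hb0)
  have hb0A : b0 ∉ A := fun h => hdAB b0 h hb0
  have hpartS : ∀ i : S, (i.1 ∈ A ∧ i.1 ∉ B) ∨ (i.1 ∉ A ∧ i.1 ∈ B) := by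
    intro i
    rcases (hmemS i.1).mp i.2 with h | h
    · exact Or.inl ⟨h, hdAB _ h⟩
    · exact Or.inr ⟨fun h' => hdAB _ h' h, h⟩
  set M : Matrix {v : V // v ∉ S} {v : V // v ∉ S} ℝ :=
    Matrix.of fun i j : {v : V // v ∉ S} => lapl c i.1 j.1 with hMdef
  have hMdet : M.det ≠ 0 := by
    intro hdet
    obtain ⟨t, ht0, htM⟩ := Matrix.exists_mulVec_eq_zero_iff.mpr hdet
    set x : V → ℝ := fun v => if h : v ∈ S then 0 else t ⟨v, h⟩ with hxdef
    have hxS : (fun j : S => x j.1) = fun _ => (0:ℝ) := by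
      funext j; exact dif_pos j.2
    have hxT : (fun j : {v : V // v ∉ S} => x j.1) = t := by
      funext j
      show (if h : (j:V) ∈ S then (0:ℝ) else t ⟨j, h⟩) = t j
      rw [dif_neg j.2]
    have h2 : ∀ i : {v : V // v ∉ S}, (lapl c *ᵥ x) i.1 = 0 := by
      intro i
      rw [rowT (lapl c) S x i, hxS, hxT]
      have hz0 : (fun _ : S => (0:ℝ)) = (0 : S → ℝ) := rfl
      rw [hz0, Matrix.mulVec_zero, ← hMdef, htM]
      simp
    have hquad0 : x ⬝ᵥ (lapl c *ᵥ x) = 0 := by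
      rw [dotProduct, sum_split S (fun v => x v * (lapl c *ᵥ x) v)]
      have e1 : ∑ i : S, x i.1 * (lapl c *ᵥ x) i.1 = 0 := Finset.sum_eq_zero fun i _ => by
        have hx0 : x i.1 = 0 := dif_pos i.2
        rw [hx0, zero_mul]
      have e2 : ∑ i : {v : V // v ∉ S}, x i.1 * (lapl c *ᵥ x) i.1 = 0 :=
        Finset.sum_eq_zero fun i _ => by rw [h2 i, mul_zero]
      rw [e1, e2, add_zero]
    have hLx : lapl c *ᵥ x = 0 := lapl_kern c hsymm hnonneg hdiag x hquad0
    obtain ⟨k, hk⟩ := hconn x hLx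
    have hk0 : k = 0 := by
      have h := hk a0
      rw [hxdef] at h
      simp only [dif_pos ha0S] at h
      exact h.symm
    apply ht0
    funext j
    have h := hk j.1
    rw [hxdef] at h
    simp only [dif_neg j.2] at h
    simpa [hk0] using h
  have hMunit : IsUnit M.det := isUnit_iff_ne_zero.mpr hMdet
  set z : S → ℝ := fun i => if i.1 ∈ A then volA⁻¹ else -volB⁻¹ with hzdef
  set w : {v : V // v ∉ S} → ℝ :=
    M⁻¹ *ᵥ ((Matrix.of fun (i : {v : V // v ∉ S}) (j : S) => lapl c i.1 j.1) *ᵥ z) with hwdef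
  set y : V → ℝ := fun v => if h : v ∈ S then z ⟨v, h⟩ else -(w ⟨v, h⟩) with hydef
  have hyE : y ⬝ᵥ (lapl c *ᵥ y) = z ⬝ᵥ (schur (lapl c) S *ᵥ z) :=
    schur_energy (lapl c) S hMunit z y (fun v => rfl)
  have hSchurSymm : (schur (lapl c) S)ᵀ = schur (lapl c) S := schur_symm (lapl c) S hLs hMunit
  have hSchur1 : schur (lapl c) S *ᵥ (fun _ => (1:ℝ)) = 0 := schur_rowsum (lapl c) S hMunit hone
  have hbridge : cI = ∑ i : S, ∑ j : S,
      if i.1 ∈ A ∧ j.1 ∈ B then -(schur (lapl c) S i j) else 0 := by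
    rw [hcI, hSdef]
    congr!
  have hzquad : z ⬝ᵥ (schur (lapl c) S *ᵥ z) = cI * (volA⁻¹ + volB⁻¹) ^ 2 := by
    rw [hbridge]
    exact cut_quad A B S hSdef hd (schur (lapl c) S) hSchurSymm hSchur1 volA⁻¹ volB⁻¹
  have hE : y ⬝ᵥ (lapl c *ᵥ y) = cI * (volA⁻¹ + volB⁻¹) ^ 2 := hyE.trans hzquad
  have hinvA : (0:ℝ) < volA⁻¹ := inv_pos.mpr hvolApos
  have hinvB : (0:ℝ) < volB⁻¹ := inv_pos.mpr hvolBpos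
  have hs : 0 < volA⁻¹ + volB⁻¹ := by linarith
  have hEnn : 0 ≤ cI * (volA⁻¹ + volB⁻¹) ^ 2 := by
    rw [← hE]; exact lapl_psd c hsymm hnonneg hdiag y
  have hcInn : 0 ≤ cI := by nlinarith [mul_pos hs hs, hEnn]
  have hsumA : ∑ i : S, (if i.1 ∈ A then wdeg c i.1 else 0) = volA := by
    rw [hvolA, sum_split S (fun v => if v ∈ A then wdeg c v else 0)]
    have h0 : ∑ i : {v : V // v ∉ S}, (if i.1 ∈ A then wdeg c i.1 else 0) = 0 :=
      Finset.sum_eq_zero fun i _ => if_neg (fun h => i.2 ((hmemS i.1).mpr (Or.inl h)))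
    rw [h0, add_zero]
  have hsumB : ∑ i : S, (if i.1 ∈ B then wdeg c i.1 else 0) = volB := by
    rw [hvolB, sum_split S (fun v => if v ∈ B then wdeg c v else 0)]
    have h0 : ∑ i : {v : V // v ∉ S}, (if i.1 ∈ B then wdeg c i.1 else 0) = 0 :=
      Finset.sum_eq_zero fun i _ => if_neg (fun h => i.2 ((hmemS i.1).mpr (Or.inr h)))
    rw [h0, add_zero]
  have hSz : ∑ i : S, wdeg c i.1 * z i = 0 := by
    have e : ∀ i : S, wdeg c i.1 * z i
        = volA⁻¹ * (if i.1 ∈ A then wdeg c i.1 else 0)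
          - volB⁻¹ * (if i.1 ∈ B then wdeg c i.1 else 0) := by
      intro i
      rcases hpartS i with ⟨h1, h2⟩ | ⟨h1, h2⟩ <;>
        simp only [hzdef, h1, h2, if_true, if_false, if_pos, if_neg, not_false_iff] <;> ring
    rw [Finset.sum_congr rfl fun i _ => e i, Finset.sum_sub_distrib, ← Finset.mul_sum,
      ← Finset.mul_sum, hsumA, hsumB]
    field_simp
    ring
  have hSz2 : ∑ i : S, wdeg c i.1 * (z i) ^ 2 = volA⁻¹ + volB⁻¹ := by
    have e : ∀ i : S, wdeg c i.1 * (z i) ^ 2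
        = volA⁻¹ ^ 2 * (if i.1 ∈ A then wdeg c i.1 else 0)
          + volB⁻¹ ^ 2 * (if i.1 ∈ B then wdeg c i.1 else 0) := by
      intro i
      rcases hpartS i with ⟨h1, h2⟩ | ⟨h1, h2⟩ <;>
        simp only [hzdef, h1, h2, if_true, if_false, if_pos, if_neg, not_false_iff] <;> ring
    rw [Finset.sum_congr rfl fun i _ => e i, Finset.sum_add_distrib, ← Finset.mul_sum,
      ← Finset.mul_sum, hsumA, hsumB]
    field_simp
  have hvolVpos : 0 < ∑ v, wdeg c v :=
    Finset.sum_pos (fun v _ => hdeg v) ⟨a0, Finset.mem_univ a0⟩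
  have hVne : (∑ v, wdeg c v) ≠ 0 := hvolVpos.ne'
  have hyS : ∀ i : S, y i.1 = z i := fun i => dif_pos i.2
  have hDy : ∑ v, wdeg c v * y v = ∑ i : {v : V // v ∉ S}, wdeg c i.1 * y i.1 := by
    rw [sum_split S (fun v => wdeg c v * y v)]
    have h0 : ∑ i : S, wdeg c i.1 * y i.1 = 0 := by
      calc ∑ i : S, wdeg c i.1 * y i.1 = ∑ i : S, wdeg c i.1 * z i :=
            Finset.sum_congr rfl fun i _ => by rw [hyS i]
        _ = 0 := hSz
    rw [h0, zero_add]
  set m : ℝ := (∑ v, wdeg c v * y v) / (∑ v, wdeg c v) with hmdef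
  set x : V → ℝ := fun v => Real.sqrt (wdeg c v) * (y v - m) with hxdef
  have hsqrtpos : ∀ v, 0 < Real.sqrt (wdeg c v) := fun v => Real.sqrt_pos.mpr (hdeg v)
  have hsqsq : ∀ v, Real.sqrt (wdeg c v) * Real.sqrt (wdeg c v) = wdeg c v := fun v =>
    Real.mul_self_sqrt (le_of_lt (hdeg v))
  have horth : x ⬝ᵥ (fun v => Real.sqrt (wdeg c v)) = 0 := by
    rw [dotProduct]
    have e : ∀ v, x v * Real.sqrt (wdeg c v) = wdeg c v * y v - wdeg c v * m := by
      intro v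
      have h1 : x v * Real.sqrt (wdeg c v)
          = (Real.sqrt (wdeg c v) * Real.sqrt (wdeg c v)) * (y v - m) := by
        simp only [hxdef]; ring
      rw [h1, hsqsq v]; ring
    rw [Finset.sum_congr rfl fun v _ => e v, Finset.sum_sub_distrib, ← Finset.sum_mul]
    simp only [hmdef]
    field_simp
    ring
  have hnormquad : ∀ x' : V → ℝ, x' ⬝ᵥ (normLapl c *ᵥ x')
      = (fun v => x' v / Real.sqrt (wdeg c v)) ⬝ᵥ
        (lapl c *ᵥ fun v => x' v / Real.sqrt (wdeg c v)) := by
    intro x'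
    simp only [dotProduct, mulVec, normLapl, Finset.mul_sum]
    refine Finset.sum_congr rfl fun u _ => Finset.sum_congr rfl fun v _ => ?_
    have hu := (hsqrtpos u).ne'
    have hv := (hsqrtpos v).ne'
    field_simp
  have hxovers : (fun v => x v / Real.sqrt (wdeg c v)) = fun v => y v - m := by
    funext v
    simp only [hxdef]
    exact mul_div_cancel_left₀ _ (hsqrtpos v).ne'
  have h1const : (fun v => y v - m) = y - m • (fun _ : V => (1:ℝ)) := by
    funext v; simp
  have hnum : x ⬝ᵥ (normLapl c *ᵥ x) = y ⬝ᵥ (lapl c *ᵥ y) := by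
    rw [hnormquad x, hxovers, h1const]
    have hLy' : lapl c *ᵥ (y - m • (fun _ : V => (1:ℝ))) = lapl c *ᵥ y := by
      rw [Matrix.mulVec_sub, Matrix.mulVec_smul, hone, smul_zero, sub_zero]
    rw [hLy', sub_dotProduct, smul_dotProduct]
    have hone' : (fun _ : V => (1:ℝ)) ⬝ᵥ (lapl c *ᵥ y) = 0 := by
      rw [dotProduct_mulVec, ← hLs, vecMul_transpose, hone, zero_dotProduct]
    rw [hone', smul_zero, sub_zero]
  have hxx : x ⬝ᵥ x = ∑ v, wdeg c v * (y v - m) ^ 2 := by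
    rw [dotProduct]
    refine Finset.sum_congr rfl fun v _ => ?_
    have h1 : x v * x v = (Real.sqrt (wdeg c v) * Real.sqrt (wdeg c v)) * (y v - m)^2 := by
      simp only [hxdef]; ring
    rw [h1, hsqsq v]
  have hTnn : (0:ℝ) ≤ ∑ i : {v : V // v ∉ S}, wdeg c i.1 * (y i.1)^2 :=
    Finset.sum_nonneg fun i _ => mul_nonneg (le_of_lt (hdeg _)) (sq_nonneg _)
  have hsplit2 : ∑ v, wdeg c v * (y v)^2
      = (volA⁻¹ + volB⁻¹) + ∑ i : {v : V // v ∉ S}, wdeg c i.1 * (y i.1)^2 := by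
    rw [sum_split S (fun v => wdeg c v * (y v)^2)]
    congr 1
    calc ∑ i : S, wdeg c i.1 * (y i.1)^2 = ∑ i : S, wdeg c i.1 * (z i)^2 :=
          Finset.sum_congr rfl fun i _ => by rw [hyS i]
      _ = volA⁻¹ + volB⁻¹ := hSz2
  have hCS : (∑ v, wdeg c v * y v)^2
      ≤ (∑ v, wdeg c v) * (∑ i : {v : V // v ∉ S}, wdeg c i.1 * (y i.1)^2) := by
    rw [hDy]
    have hcs := Finset.sum_mul_sq_le_sq_mul_sq Finset.univ
      (fun i : {v : V // v ∉ S} => Real.sqrt (wdeg c i.1))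
      (fun i => Real.sqrt (wdeg c i.1) * y i.1)
    have e0 : ∑ i : {v : V // v ∉ S},
        Real.sqrt (wdeg c i.1) * (Real.sqrt (wdeg c i.1) * y i.1)
        = ∑ i : {v : V // v ∉ S}, wdeg c i.1 * y i.1 :=
      Finset.sum_congr rfl fun i _ => by rw [← mul_assoc, hsqsq]
    have e1 : ∑ i : {v : V // v ∉ S}, (Real.sqrt (wdeg c i.1))^2
        = ∑ i : {v : V // v ∉ S}, wdeg c i.1 :=
      Finset.sum_congr rfl fun i _ => by rw [pow_two, hsqsq]
    have e2 : ∑ i : {v : V // v ∉ S}, (Real.sqrt (wdeg c i.1) * y i.1)^2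
        = ∑ i : {v : V // v ∉ S}, wdeg c i.1 * (y i.1)^2 :=
      Finset.sum_congr rfl fun i _ => by
        rw [mul_pow, pow_two (Real.sqrt (wdeg c i.1)), hsqsq]
    rw [e0, e1, e2] at hcs
    refine le_trans hcs ?_
    apply mul_le_mul_of_nonneg_right _ hTnn
    rw [sum_split S (fun v => wdeg c v)]
    have h0 : (0:ℝ) ≤ ∑ i : S, wdeg c i.1 := Finset.sum_nonneg fun i _ => le_of_lt (hdeg _)
    linarith
  have hD1eq : ∑ v, wdeg c v * (y v - m)^2
      = (∑ v, wdeg c v * (y v)^2) - (∑ v, wdeg c v * y v)^2 / (∑ v, wdeg c v) := by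
    have e : ∀ v : V, wdeg c v * (y v - m)^2
        = wdeg c v * (y v)^2 - 2*m*(wdeg c v * y v) + m^2 * wdeg c v := fun v => by ring
    rw [Finset.sum_congr rfl fun v _ => e v]
    rw [Finset.sum_add_distrib, Finset.sum_sub_distrib, ← Finset.mul_sum, ← Finset.mul_sum]
    simp only [hmdef]
    field_simp
    ring
  have hlow : volA⁻¹ + volB⁻¹ ≤ x ⬝ᵥ x := by
    rw [hxx, hD1eq, hsplit2]
    have hdiv : (∑ v, wdeg c v * y v)^2 / (∑ v, wdeg c v)
        ≤ ∑ i : {v : V // v ∉ S}, wdeg c i.1 * (y i.1)^2 := by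
      rw [div_le_iff₀ hvolVpos]
      calc (∑ v, wdeg c v * y v)^2 ≤ _ := hCS
        _ = _ := mul_comm _ _
    linarith
  have hya0 : y a0 = volA⁻¹ := by
    simp only [hydef]
    rw [dif_pos ha0S]
    simp only [hzdef]
    simp [ha0]
  have hyb0 : y b0 = -volB⁻¹ := by
    simp only [hydef]
    rw [dif_pos hb0S]
    simp only [hzdef]
    simp [hb0A]
  have hxne : x ≠ 0 := by
    intro h
    have ha' : y a0 = m := by
      have h0 := congrFun h a0
      simp only [hxdef, Pi.zero_apply] at h0
      rcases mul_eq_zero.mp h0 with h' | h'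
      · exact absurd h' (hsqrtpos a0).ne'
      · exact sub_eq_zero.mp h'
    have hb' : y b0 = m := by
      have h0 := congrFun h b0
      simp only [hxdef, Pi.zero_apply] at h0
      rcases mul_eq_zero.mp h0 with h' | h'
      · exact absurd h' (hsqrtpos b0).ne'
      · exact sub_eq_zero.mp h'
    rw [hya0] at ha'
    rw [hyb0] at hb'
    linarith
  have hbdd : BddBelow {r : ℝ | ∃ x' : V → ℝ, x' ≠ 0 ∧
      x' ⬝ᵥ (fun v => Real.sqrt (wdeg c v)) = 0 ∧
      r = (x' ⬝ᵥ (normLapl c *ᵥ x')) / (x' ⬝ᵥ x')} := by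
    refine ⟨0, fun r hr => ?_⟩
    obtain ⟨x', hx'ne, _, hr'⟩ := hr
    rw [hr']
    apply div_nonneg
    · rw [hnormquad x']
      exact lapl_psd c hsymm hnonneg hdiag _
    · rw [dotProduct]
      exact Finset.sum_nonneg fun v _ => mul_self_nonneg _
  have hmem : (x ⬝ᵥ (normLapl c *ᵥ x)) / (x ⬝ᵥ x) ∈ {r : ℝ | ∃ x' : V → ℝ, x' ≠ 0 ∧
      x' ⬝ᵥ (fun v => Real.sqrt (wdeg c v)) = 0 ∧
      r = (x' ⬝ᵥ (normLapl c *ᵥ x')) / (x' ⬝ᵥ x')} :=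
    ⟨x, hxne, horth, rfl⟩
  have hlam_le : lambdaG c ≤ (x ⬝ᵥ (normLapl c *ᵥ x)) / (x ⬝ᵥ x) := csInf_le hbdd hmem
  have hxxpos : (0:ℝ) < x ⬝ᵥ x := lt_of_lt_of_le hs hlow
  have hfrac : (x ⬝ᵥ (normLapl c *ᵥ x)) / (x ⬝ᵥ x) ≤ cI * (volA⁻¹ + volB⁻¹) := by
    rw [hnum, hE]
    have h1 : cI * (volA⁻¹ + volB⁻¹)^2 / (x ⬝ᵥ x)
        ≤ cI * (volA⁻¹ + volB⁻¹)^2 / (volA⁻¹ + volB⁻¹) :=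
      div_le_div_of_nonneg_left hEnn hs hlow
    refine le_trans h1 (le_of_eq ?_)
    rw [pow_two, mul_div_assoc, mul_div_assoc, div_self hs.ne', mul_one]
  have hkey : cI * volAB / (volA * volB) = cI * (volA⁻¹ + volB⁻¹) := by
    rw [hvolABsum, mul_div_assoc]
    have hq : (volA + volB) / (volA * volB) = volA⁻¹ + volB⁻¹ := by
      field_simp
      ring
    rw [hq]
  refine ⟨?_, ?_⟩
  · rw [hkey]
    exact le_trans hlam_le hfrac
  · rw [hkey]
    have hmin : 0 < min volA volB := lt_min hvolApos hvolBpos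
    have h1 : volA⁻¹ ≤ (min volA volB)⁻¹ := by
      apply inv_anti₀ hmin (min_le_left _ _)
    have h2 : volB⁻¹ ≤ (min volA volB)⁻¹ := by
      apply inv_anti₀ hmin (min_le_right _ _)
    have h3 : cI * (volA⁻¹ + volB⁻¹) ≤ cI * (2 * (min volA volB)⁻¹) :=
      mul_le_mul_of_nonneg_left (by linarith) hcInn
    refine le_trans h3 (le_of_eq ?_)
    rw [div_eq_mul_inv]
    ring
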